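/- Let n, d, m ∈ ℕ, let 0 < ε_d ≤ 1, 0 < ε ≤ 1, 0 < δ ≤ 1, and fix u_1,…,u_n ∈ {−1/√n, 1/√n}. Let S satisfy Assumption(ψ, φ) with ψ ≤ 0.1 and φ ≤ ε_d/(4mn), and suppose θ = (w_1,…,w_n) is an (ε, δ)-approximate KKT point of the margin-maximization problem w.r.t. S with multipliers λ_1,…,λ_m. Write J₊ = {j ∈ [n] : u_j > 0} and J₋ = {j ∈ [n] : u_j < 0}. Then for every i ∈ [m]: max{ Σ_{j∈J₊} u_j² λ_i σ'_{i,j}(θ), Σ_{j∈J₋} u_j² λ_i σ'_{i,j}(θ) } ≤ 2.5 + 5.25·ε + 2.4·δ ≤ 10.2; consequently Σ_{j=1}^n u_j² λ_i σ'_{i,j}(θ) ≤ 5 + 10.5·ε + 4.8·δ ≤ 20.4 and λ_i ≤ n·(5 + 10.5·ε + 4.8·δ) ≤ 20.4·n. -/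

import Mathlib

/-- ReLU activation-pattern indicator: `σ'(w, x) = 1` if `⟨w, x⟩ ≥ 0` and `0` otherwise. -/
noncomputable def act {d : ℕ} (w x : EuclideanSpace ℝ (Fin d)) : ℝ :=
  if 0 ≤ (inner ℝ w x : ℝ) then 1 else 0

/-- Two-layer ReLU network with fixed second layer `u` and first-layer weights `θ`. -/
noncomputable def net {n d : ℕ} (u : Fin n → ℝ)
    (θ : Fin n → EuclideanSpace ℝ (Fin d)) (x : EuclideanSpace ℝ (Fin d)) : ℝ :=
  ∑ j, u j * max ((inner ℝ (θ j) x : ℝ)) 0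

lemma act_cases {d : ℕ} (w x : EuclideanSpace ℝ (Fin d)) : act w x = 0 ∨ act w x = 1 := by
  unfold act; split <;> simp

lemma act_nonneg {d : ℕ} (w x : EuclideanSpace ℝ (Fin d)) : 0 ≤ act w x := by
  rcases act_cases w x with h | h <;> rw [h] <;> norm_num

lemma act_le_one {d : ℕ} (w x : EuclideanSpace ℝ (Fin d)) : act w x ≤ 1 := by
  rcases act_cases w x with h | h <;> rw [h] <;> norm_num

lemma act_mul_inner {d : ℕ} (w x : EuclideanSpace ℝ (Fin d)) :
    act w x * (inner ℝ w x : ℝ) = max ((inner ℝ w x : ℝ)) 0 := by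
  unfold act
  split
  · rename_i h; rw [one_mul, max_eq_left h]
  · rename_i h; rw [zero_mul, max_eq_right (le_of_lt (lt_of_not_ge h))]

lemma aux_sq_le (S ε : ℝ) (h : S ^ 2 ≤ ε ^ 2) (hS : 0 ≤ S) (hε : 0 ≤ ε) : S ≤ ε := by nlinarith
lemma aux_norm_le (a ψ : ℝ) (h : a ^ 2 ≤ 1 + ψ) (hψ : ψ ≤ 0.1) (h0 : 0 ≤ a) : a ≤ 1.05 := by
  nlinarith
lemma aux_h10 (ε δ t l : ℝ) (hδ : 0 < δ) (hδ1 : δ ≤ 1) (hε : 0 < ε) (ht : 0 ≤ t)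
    (hl : 2.5 < l) (h : 0.65 * (l * t) ≤ l + δ + 1.05 * (l * ε)) :
    t ≤ 1.54 + 1.62 * ε + 0.62 * δ := by
  nlinarith [mul_nonneg hδ.le (by linarith : (0:ℝ) ≤ l - 2.5),
    mul_nonneg hε.le (by linarith : (0:ℝ) ≤ l - 2.5),
    mul_nonneg ht (by linarith : (0:ℝ) ≤ l - 2.5)]
lemma aux_final (ε δ t l : ℝ) (hδ : 0 < δ) (hε : 0 < ε) (ht : 0 ≤ t) (hl : 2.5 < l)
    (h : 0.9 * (l * t) ≤ l + δ + l * (0.63 + 0.41 * ε + 0.16 * δ) + 1.05 * (l * ε)) :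
    t ≤ 2.5 + 5.25 * ε + 2.4 * δ := by
  nlinarith [mul_nonneg hδ.le (by linarith : (0:ℝ) ≤ l - 2.5),
    mul_nonneg hε.le (by linarith : (0:ℝ) ≤ l - 2.5),
    mul_nonneg ht (by linarith : (0:ℝ) ≤ l - 2.5)]

set_option maxHeartbeats 1000000 in
theorem stmt_13
    (n d m : ℕ)
    (ε δ εd ψ φ : ℝ)
    (hεdpos : 0 < εd) (hεdle : εd ≤ 1)
    (hεpos : 0 < ε) (hεle : ε ≤ 1)
    (hδpos : 0 < δ) (hδle : δ ≤ 1)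
    (hψ : ψ ≤ 0.1) (hφ : φ ≤ εd / (4 * m * n))
    (u : Fin n → ℝ)
    (hu : ∀ j, u j = -(1 / Real.sqrt n) ∨ u j = 1 / Real.sqrt n)
    (x : Fin m → EuclideanSpace ℝ (Fin d)) (y : Fin m → ℝ)
    (hy : ∀ i, y i = 1 ∨ y i = -1)
    (hnorm : ∀ i, 1 - ψ ≤ ‖x i‖ ^ 2 ∧ ‖x i‖ ^ 2 ≤ 1 + ψ)
    (hortho : ∀ i j, i ≠ j → |(inner ℝ (x i) (x j) : ℝ)| ≤ φ)
    (θ : Fin n → EuclideanSpace ℝ (Fin d)) (lam : Fin m → ℝ)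
    (hlam : ∀ i, 0 ≤ lam i)
    (hstat : Real.sqrt (∑ j, ‖θ j - u j • ∑ i, (lam i * y i * act (θ j) (x i)) • x i‖ ^ 2) ≤ ε)
    (hcs : ∀ i, lam i * (y i * net u θ (x i) - 1) ≤ δ)
    (hpf : ∀ i, 1 ≤ y i * net u θ (x i)) :
    (∀ i, max (∑ j ∈ Finset.univ.filter (fun j => 0 < u j), u j ^ 2 * lam i * act (θ j) (x i))
        (∑ j ∈ Finset.univ.filter (fun j => u j < 0), u j ^ 2 * lam i * act (θ j) (x i)) ≤
      2.5 + 5.25 * ε + 2.4 * δ) ∧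
    2.5 + 5.25 * ε + 2.4 * δ ≤ 10.2 ∧
    (∀ i, ∑ j, u j ^ 2 * lam i * act (θ j) (x i) ≤ 5 + 10.5 * ε + 4.8 * δ) ∧
    5 + 10.5 * ε + 4.8 * δ ≤ 20.4 ∧
    (∀ i, lam i ≤ n * (5 + 10.5 * ε + 4.8 * δ)) ∧
    (n : ℝ) * (5 + 10.5 * ε + 4.8 * δ) ≤ 20.4 * n := by
  have hnum1 : (2.5:ℝ) + 5.25 * ε + 2.4 * δ ≤ 10.2 := by nlinarith
  have hnum2 : (5:ℝ) + 10.5 * ε + 4.8 * δ ≤ 20.4 := by nlinarith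
  have hnum3 : (n:ℝ) * (5 + 10.5 * ε + 4.8 * δ) ≤ 20.4 * n := by
    have hn0 : (0:ℝ) ≤ n := Nat.cast_nonneg n
    nlinarith
  rcases Nat.eq_zero_or_pos m with hm | hm
  · subst hm
    exact ⟨fun i => i.elim0, hnum1, fun i => i.elim0, hnum2, fun i => i.elim0, hnum3⟩
  rcases Nat.eq_zero_or_pos n with hn | hn
  · exfalso
    have h1 := hpf ⟨0, hm⟩
    subst hn
    simp [net] at h1
    linarith
  have hn1 : (1:ℝ) ≤ n := by exact_mod_cast hn
  have hm1 : (1:ℝ) ≤ m := by exact_mod_cast hm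
  have hnR : (0:ℝ) < n := by linarith
  have hmR : (0:ℝ) < m := by linarith
  have husq : ∀ j, u j ^ 2 = 1 / n := by
    intro j
    have hsq : (Real.sqrt n) ^ 2 = n := Real.sq_sqrt (Nat.cast_nonneg n)
    have h2 : (1 / Real.sqrt n) ^ 2 = 1 / (n:ℝ) := by rw [div_pow, one_pow, hsq]
    rcases hu j with h | h <;> rw [h]
    · rw [neg_pow, h2]; ring
    · exact h2
  have hsumusq : ∑ j, u j ^ 2 = 1 := by
    rw [Finset.sum_congr rfl (fun j _ => husq j), Finset.sum_const, Finset.card_univ,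
      Fintype.card_fin, nsmul_eq_mul]
    field_simp
  set φ' := max φ 0 with hφ'def
  have hφ'0 : 0 ≤ φ' := le_max_right _ _
  have hortho' : ∀ k i, k ≠ i → |(inner ℝ (x k) (x i) : ℝ)| ≤ φ' :=
    fun k i h => (hortho k i h).trans (le_max_left _ _)
  have hφ'le : φ' ≤ εd / (4 * m * n) := max_le hφ (by positivity)
  set Λ := ∑ k, lam k with hΛdef
  have hΛ0 : 0 ≤ Λ := Finset.sum_nonneg fun k _ => hlam k
  set T : Fin m → ℝ := fun i => ∑ j, u j ^ 2 * lam i * act (θ j) (x i) with hTdef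
  have htermnn : ∀ i j, 0 ≤ u j ^ 2 * lam i * act (θ j) (x i) :=
    fun i j => mul_nonneg (mul_nonneg (sq_nonneg _) (hlam i)) (act_nonneg _ _)
  have hT0 : ∀ i, 0 ≤ T i := fun i => Finset.sum_nonneg fun j _ => htermnn i j
  have hTle : ∀ i, T i ≤ lam i := by
    intro i
    have h1 : T i ≤ ∑ j, u j ^ 2 * lam i := by
      apply Finset.sum_le_sum
      intro j _
      exact mul_le_of_le_one_right (mul_nonneg (sq_nonneg _) (hlam i)) (act_le_one _ _)
    calc T i ≤ ∑ j, u j ^ 2 * lam i := h1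
      _ = (∑ j, u j ^ 2) * lam i := by rw [Finset.sum_mul]
      _ = lam i := by rw [hsumusq, one_mul]
  set e : Fin n → EuclideanSpace ℝ (Fin d) :=
    fun j => θ j - u j • ∑ i, (lam i * y i * act (θ j) (x i)) • x i with hedef
  have hE : ∑ j, ‖e j‖ ^ 2 ≤ ε ^ 2 := by
    have h0 : 0 ≤ ∑ j, ‖e j‖ ^ 2 := Finset.sum_nonneg fun j _ => sq_nonneg _
    nlinarith [hstat, Real.sq_sqrt h0, Real.sqrt_nonneg (∑ j, ‖e j‖ ^ 2)]
  have hinner_exp : ∀ j i, (inner ℝ (θ j) (x i) : ℝ) =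
      u j * (∑ k, lam k * y k * act (θ j) (x k) * (inner ℝ (x k) (x i) : ℝ)) +
        (inner ℝ (e j) (x i) : ℝ) := by
    intro j i
    have hθj : θ j = u j • (∑ k, (lam k * y k * act (θ j) (x k)) • x k) + e j := by
      simp [hedef]
    conv_lhs => rw [hθj]
    rw [inner_add_left, real_inner_smul_left, sum_inner]
    congr 2
    apply Finset.sum_congr rfl
    intro k _
    rw [real_inner_smul_left]
  have hkey : ∀ i, |y i * net u θ (x i) - T i * ‖x i‖ ^ 2| ≤ φ' * Λ + 1.05 * ε := by
    intro i
    set D1 : ℝ := ∑ j, u j ^ 2 * act (θ j) (x i) * y i *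
        (∑ k ∈ Finset.univ.erase i, lam k * y k * act (θ j) (x k) * (inner ℝ (x k) (x i) : ℝ))
      with hD1def
    set D2 : ℝ := ∑ j, y i * u j * act (θ j) (x i) * (inner ℝ (e j) (x i) : ℝ) with hD2def
    have hid : y i * net u θ (x i) - T i * ‖x i‖ ^ 2 = D1 + D2 := by
      rw [hD1def, hD2def, hTdef]
      unfold net
      rw [Finset.mul_sum, Finset.sum_mul, ← Finset.sum_add_distrib, ← Finset.sum_sub_distrib]
      apply Finset.sum_congr rfl
      intro j _
      rw [← act_mul_inner, hinner_exp j i,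
        ← Finset.add_sum_erase _
          (fun k => lam k * y k * act (θ j) (x k) * (inner ℝ (x k) (x i) : ℝ))
          (Finset.mem_univ i)]
      have hx : (inner ℝ (x i) (x i) : ℝ) = ‖x i‖ ^ 2 := real_inner_self_eq_norm_sq (x i)
      rw [hx]
      rcases act_cases (θ j) (x i) with h | h <;> rw [h] <;>
        rcases hy i with h2 | h2 <;> rw [h2] <;> ring
    have hbD1 : |D1| ≤ φ' * Λ := by
      rw [hD1def]
      calc |∑ j, u j ^ 2 * act (θ j) (x i) * y i *
          (∑ k ∈ Finset.univ.erase i, lam k * y k * act (θ j) (x k) * (inner ℝ (x k) (x i) : ℝ))|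
          ≤ ∑ j, |u j ^ 2 * act (θ j) (x i) * y i *
          (∑ k ∈ Finset.univ.erase i, lam k * y k * act (θ j) (x k) * (inner ℝ (x k) (x i) : ℝ))| :=
            Finset.abs_sum_le_sum_abs _ _
        _ ≤ ∑ j, u j ^ 2 * (φ' * Λ) := by
            apply Finset.sum_le_sum
            intro j _
            have hin : |∑ k ∈ Finset.univ.erase i,
                lam k * y k * act (θ j) (x k) * (inner ℝ (x k) (x i) : ℝ)| ≤ φ' * Λ := by
              calc |∑ k ∈ Finset.univ.erase i,
                  lam k * y k * act (θ j) (x k) * (inner ℝ (x k) (x i) : ℝ)|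
                  ≤ ∑ k ∈ Finset.univ.erase i,
                    |lam k * y k * act (θ j) (x k) * (inner ℝ (x k) (x i) : ℝ)| :=
                    Finset.abs_sum_le_sum_abs _ _
                _ ≤ ∑ k ∈ Finset.univ.erase i, lam k * φ' := by
                    apply Finset.sum_le_sum
                    intro k hk
                    have hki : k ≠ i := Finset.ne_of_mem_erase hk
                    have hip := hortho' k i hki
                    have hyk : |y k| = 1 := by rcases hy k with h | h <;> rw [h] <;> norm_num
                    rw [abs_mul, abs_mul, abs_mul, hyk, abs_of_nonneg (hlam k),
                      abs_of_nonneg (act_nonneg (θ j) (x k))]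
                    have ha1 := act_le_one (θ j) (x k)
                    have ha0 := act_nonneg (θ j) (x k)
                    have hipn := abs_nonneg ((inner ℝ (x k) (x i)) : ℝ)
                    have hc := mul_le_mul_of_nonneg_left
                      (mul_le_mul ha1 hip hipn zero_le_one) (hlam k)
                    linarith
                _ ≤ ∑ k, lam k * φ' := by
                    apply Finset.sum_le_sum_of_subset_of_nonneg (Finset.subset_univ _)
                    intro k _ _
                    exact mul_nonneg (hlam k) hφ'0
                _ = φ' * Λ := by rw [hΛdef, ← Finset.sum_mul]; ring
            have hyi : |y i| = 1 := by rcases hy i with h | h <;> rw [h] <;> norm_num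
            rw [abs_mul, abs_mul, abs_mul, hyi, abs_of_nonneg (sq_nonneg (u j)),
              abs_of_nonneg (act_nonneg (θ j) (x i))]
            have ha1 := act_le_one (θ j) (x i)
            have ha0 := act_nonneg (θ j) (x i)
            have hphl : 0 ≤ φ' * Λ := mul_nonneg hφ'0 hΛ0
            have habs0 := abs_nonneg (∑ k ∈ Finset.univ.erase i,
                lam k * y k * act (θ j) (x k) * (inner ℝ (x k) (x i) : ℝ))
            have hc := mul_le_mul_of_nonneg_left
              (mul_le_mul ha1 hin habs0 zero_le_one) (sq_nonneg (u j))
            linarith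
        _ = φ' * Λ := by rw [← Finset.sum_mul, hsumusq, one_mul]
    have hbD2 : |D2| ≤ 1.05 * ε := by
      have hxi : ‖x i‖ ≤ 1.05 := aux_norm_le _ ψ (hnorm i).2 hψ (norm_nonneg _)
      have hcs2 : ∑ j, |u j| * ‖e j‖ ≤ ε := by
        have hCS := Finset.sum_mul_sq_le_sq_mul_sq Finset.univ (fun j => |u j|) (fun j => ‖e j‖)
        have h1 : ∑ j, |u j| ^ 2 = 1 := by
          rw [Finset.sum_congr rfl (fun j _ => sq_abs (u j))]; exact hsumusq
        have h2 : (∑ j, |u j| * ‖e j‖) ^ 2 ≤ ε ^ 2 := by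
          calc (∑ j, |u j| * ‖e j‖) ^ 2 ≤ (∑ j, |u j| ^ 2) * ∑ j, ‖e j‖ ^ 2 := hCS
            _ = ∑ j, ‖e j‖ ^ 2 := by rw [h1, one_mul]
            _ ≤ ε ^ 2 := hE
        have h3 : 0 ≤ ∑ j, |u j| * ‖e j‖ :=
          Finset.sum_nonneg fun j _ => mul_nonneg (abs_nonneg _) (norm_nonneg _)
        exact aux_sq_le _ _ h2 h3 hεpos.le
      rw [hD2def]
      calc |∑ j, y i * u j * act (θ j) (x i) * (inner ℝ (e j) (x i) : ℝ)|
          ≤ ∑ j, |y i * u j * act (θ j) (x i) * (inner ℝ (e j) (x i) : ℝ)| :=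
            Finset.abs_sum_le_sum_abs _ _
        _ ≤ ∑ j, |u j| * ‖e j‖ * 1.05 := by
            apply Finset.sum_le_sum
            intro j _
            have hyi : |y i| = 1 := by rcases hy i with h | h <;> rw [h] <;> norm_num
            rw [abs_mul, abs_mul, abs_mul, hyi, abs_of_nonneg (act_nonneg (θ j) (x i))]
            have ha1 := act_le_one (θ j) (x i)
            have ha0 := act_nonneg (θ j) (x i)
            have hie : |(inner ℝ (e j) (x i) : ℝ)| ≤ ‖e j‖ * ‖x i‖ := abs_real_inner_le_norm _ _
            have hien := abs_nonneg ((inner ℝ (e j) (x i)) : ℝ)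
            have hun := abs_nonneg (u j)
            have hen := norm_nonneg (e j)
            have hxn := norm_nonneg (x i)
            have hx2 : |(inner ℝ (e j) (x i) : ℝ)| ≤ ‖e j‖ * 1.05 :=
              hie.trans (mul_le_mul_of_nonneg_left hxi hen)
            have hc := mul_le_mul_of_nonneg_left
              (mul_le_mul ha1 hx2 hien zero_le_one) hun
            linarith
        _ = (∑ j, |u j| * ‖e j‖) * 1.05 := by rw [Finset.sum_mul]
        _ ≤ ε * 1.05 := mul_le_mul_of_nonneg_right hcs2 (by norm_num)
        _ = 1.05 * ε := by ring
    rw [hid]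
    calc |D1 + D2| ≤ |D1| + |D2| := abs_add_le _ _
      _ ≤ φ' * Λ + 1.05 * ε := add_le_add hbD1 hbD2
  have hactive : ∀ i, ∃ j, act (θ j) (x i) = 1 := by
    intro i
    by_contra hcon
    push_neg at hcon
    have hnet : net u θ (x i) = 0 := by
      unfold net
      apply Finset.sum_eq_zero
      intro j _
      rcases act_cases (θ j) (x i) with h | h
      · have h2 : ¬ (0:ℝ) ≤ inner ℝ (θ j) (x i) := by
          intro hge
          unfold act at h
          rw [if_pos hge] at h
          norm_num at h
        rw [max_eq_right (le_of_lt (lt_of_not_ge h2)), mul_zero]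
      · exact absurd h (hcon j)
    have h1 := hpf i
    rw [hnet, mul_zero] at h1
    linarith
  have hlamT : ∀ i, lam i ≤ n * T i := by
    intro i
    obtain ⟨j0, hj0⟩ := hactive i
    have h1 : u j0 ^ 2 * lam i * act (θ j0) (x i) ≤ T i :=
      Finset.single_le_sum (fun j _ => htermnn i j) (Finset.mem_univ j0)
    rw [hj0, husq j0] at h1
    have h2 : (n:ℝ) * (1 / n * lam i * 1) = lam i := by field_simp
    calc lam i = n * (1 / n * lam i * 1) := h2.symm
      _ ≤ n * T i := mul_le_mul_of_nonneg_left h1 hnR.le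
  obtain ⟨i0, -, hi0⟩ := Finset.exists_max_image Finset.univ lam ⟨⟨0, hm⟩, Finset.mem_univ _⟩
  set L := lam i0 with hLdef
  have hL0 : 0 ≤ L := hlam i0
  have hΛmL : Λ ≤ m * L := by
    rw [hΛdef]
    calc ∑ k, lam k ≤ ∑ _k : Fin m, L := Finset.sum_le_sum fun k _ => hi0 k (Finset.mem_univ k)
      _ = m * L := by rw [Finset.sum_const, Finset.card_univ, Fintype.card_fin, nsmul_eq_mul]
  have hφ'L : φ' * Λ ≤ L / (4 * n) := by
    have h1 : φ' * Λ ≤ φ' * (m * L) := mul_le_mul_of_nonneg_left hΛmL hφ'0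
    have h2 : φ' * (m * L) ≤ (εd / (4 * m * n)) * (m * L) :=
      mul_le_mul_of_nonneg_right hφ'le (by positivity)
    have h3 : (εd / (4 * m * n)) * (m * L) = εd * L / (4 * n) := by
      field_simp
    have h4 : εd * L / (4 * n) ≤ L / (4 * n) := by
      apply (div_le_div_iff_of_pos_right (by positivity)).mpr
      nlinarith
    linarith
  have hPhiLam : φ' * Λ ≤ 0.63 + 0.41 * ε + 0.16 * δ := by
    rcases le_or_gt L 2.5 with hL | hL
    · have h1 : L / (4 * n) ≤ 2.5 / 4 := by
        apply div_le_div₀ (by norm_num) hL (by norm_num)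
        linarith
      linarith [hφ'L, hεpos, hδpos]
    · have hkey0 := hkey i0
      have hcs0 := hcs i0
      have hlamT0 := hlamT i0
      have hnormlo := (hnorm i0).1
      have hT00 := hT0 i0
      have h5 : T i0 * ‖x i0‖ ^ 2 ≤ y i0 * net u θ (x i0) + (φ' * Λ + 1.05 * ε) := by
        have h := (abs_le.mp hkey0).1
        linarith
      have h6 : 0.9 * T i0 ≤ T i0 * ‖x i0‖ ^ 2 := by
        have hc := mul_le_mul_of_nonneg_left
          (show (0.9:ℝ) ≤ ‖x i0‖ ^ 2 by linarith) hT00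
        linarith
      have h7 : L * (y i0 * net u θ (x i0)) ≤ L + δ := by linarith [hcs0]
      have h8 : φ' * Λ ≤ T i0 / 4 := by
        have h8a : L / (4 * n) ≤ T i0 / 4 := by
          rw [div_le_div_iff₀ (by positivity) (by norm_num)]
          linarith [hlamT0]
        linarith
      have hLpos : (0:ℝ) < L := by linarith
      have h9 : 0.65 * (L * T i0) ≤ L + δ + 1.05 * (L * ε) := by
        have h5' := mul_le_mul_of_nonneg_left (h6.trans h5) hLpos.le
        have h8' := mul_le_mul_of_nonneg_left h8 hLpos.le
        linarith [h5', h7, h8']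
      have h10 : T i0 ≤ 1.54 + 1.62 * ε + 0.62 * δ :=
        aux_h10 ε δ (T i0) L hδpos hδle hεpos hT00 hL h9
      linarith
  have hTbound : ∀ i, T i ≤ 2.5 + 5.25 * ε + 2.4 * δ := by
    intro i
    rcases le_or_gt (lam i) 2.5 with hli | hli
    · linarith [hTle i, hεpos, hδpos]
    · have hkeyi := hkey i
      have h5 : T i * ‖x i‖ ^ 2 ≤ y i * net u θ (x i) + (φ' * Λ + 1.05 * ε) := by
        have h := (abs_le.mp hkeyi).1
        linarith
      have h6 : 0.9 * T i ≤ T i * ‖x i‖ ^ 2 := by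
        have hc := mul_le_mul_of_nonneg_left
          (show (0.9:ℝ) ≤ ‖x i‖ ^ 2 by linarith [(hnorm i).1]) (hT0 i)
        linarith
      have h7 : lam i * (y i * net u θ (x i)) ≤ lam i + δ := by linarith [hcs i]
      have hli0 : (0:ℝ) < lam i := by linarith
      have h9 : 0.9 * (lam i * T i) ≤
          lam i + δ + lam i * (0.63 + 0.41 * ε + 0.16 * δ) + 1.05 * (lam i * ε) := by
        have h5' := mul_le_mul_of_nonneg_left (h6.trans h5) hli0.le
        have hP' := mul_le_mul_of_nonneg_left hPhiLam hli0.le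
        linarith [h5', h7, hP']
      exact aux_final ε δ (T i) (lam i) hδpos hεpos (hT0 i) hli h9
  have hT2 : ∀ i, T i ≤ 5 + 10.5 * ε + 4.8 * δ := by
    intro i
    linarith [hTbound i, hεpos, hδpos]
  refine ⟨?_, hnum1, fun i => hT2 i, hnum2, ?_, hnum3⟩
  · intro i
    have hsub : ∀ s : Finset (Fin n),
        (∑ j ∈ s, u j ^ 2 * lam i * act (θ j) (x i)) ≤ T i := fun s =>
      Finset.sum_le_sum_of_subset_of_nonneg (Finset.subset_univ s) fun j _ _ => htermnn i j
    exact max_le ((hsub _).trans (hTbound i)) ((hsub _).trans (hTbound i))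
  · intro i
    calc lam i ≤ n * T i := hlamT i
      _ ≤ n * (5 + 10.5 * ε + 4.8 * δ) :=
        mul_le_mul_of_nonneg_left (hT2 i) (Nat.cast_nonneg n)
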